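/- arXiv:1405.4426 — 2 statements merged into one kernel-verified Lean document; each statement's English description precedes it below -/
import Mathlib

section
/- Let H be a Hilbert space and S a non-negative self-adjoint operator on H with operator norm at most 1. If φ ∈ H has norm 1 and ‖Sφ‖ ≥ 1 - ε², then ⟨φ - Sφ, φ⟩ ≤ 2ε² and ‖φ - Sφ‖ ≤ 2ε. -/
open scoped ComplexInnerProductSpace

/-- If `S` is a non-negative self-adjoint operator of norm at most 1 on a complex Hilbert
space and `φ` is a unit vector with `‖S φ‖ ≥ 1 - ε²`, then `⟨φ - Sφ, φ⟩ ≤ 2ε²` and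
`‖φ - Sφ‖ ≤ 2ε`. -/
theorem stmt0 {H : Type*} [NormedAddCommGroup H] [InnerProductSpace ℂ H] [CompleteSpace H]
    (S : H →L[ℂ] H) (hsa : IsSelfAdjoint S)
    (hpos : ∀ x : H, 0 ≤ (⟪S x, x⟫ : ℂ).re)
    (hnorm : ‖S‖ ≤ 1)
    (φ : H) (hφ : ‖φ‖ = 1) (ε : ℝ) (hε : 0 ≤ ε)
    (h : 1 - ε ^ 2 ≤ ‖S φ‖) :
    (⟪φ - S φ, φ⟫ : ℂ).re ≤ 2 * ε ^ 2 ∧ ‖φ - S φ‖ ≤ 2 * ε := by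
  have hsym := hsa.isSymmetric
  set n : ℝ := ‖S φ‖ with hn
  have hn0 : 0 ≤ n := norm_nonneg _
  set c : ℝ := (⟪S φ, φ⟫ : ℂ).re with hc
  -- key: n^2 ≤ c
  have key : n ^ 2 ≤ c := by
    have h1 : 0 ≤ (⟪S (φ - S φ), φ - S φ⟫ : ℂ).re := hpos _
    have hexp : (⟪S (φ - S φ), φ - S φ⟫ : ℂ) =
        ⟪S φ, φ⟫ - ⟪S φ, S φ⟫ - ⟪S (S φ), φ⟫ + ⟪S (S φ), S φ⟫ := by
      rw [map_sub, inner_sub_left, inner_sub_right, inner_sub_right]; ring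
    have hs1 : (⟪S (S φ), φ⟫ : ℂ) = ⟪S φ, S φ⟫ := hsym (S φ) φ
    have hs2 : (⟪S φ, S φ⟫ : ℂ).re = n ^ 2 := by
      have := inner_self_eq_norm_sq (𝕜 := ℂ) (S φ); simpa using this
    have hs3 : (⟪S (S φ), S φ⟫ : ℂ).re ≤ n ^ 2 := by
      have h4 : (⟪S (S φ), S φ⟫ : ℂ).re ≤ ‖S (S φ)‖ * ‖S φ‖ := by
        have := re_inner_le_norm (𝕜 := ℂ) (S (S φ)) (S φ); simpa using this
      have h5 : ‖S (S φ)‖ ≤ ‖S‖ * ‖S φ‖ := S.le_opNorm _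
      nlinarith
    rw [hexp] at h1
    simp only [Complex.add_re, Complex.sub_re] at h1
    rw [hs1] at h1
    nlinarith [hs2, hs3]
  have hcn : 1 - 2 * ε ^ 2 ≤ c := by nlinarith
  constructor
  · have : (⟪φ - S φ, φ⟫ : ℂ).re = 1 - c := by
      rw [inner_sub_left]
      simp only [Complex.sub_re]
      have h6 : (⟪φ, φ⟫ : ℂ).re = ‖φ‖ ^ 2 := by
        have := inner_self_eq_norm_sq (𝕜 := ℂ) φ; simpa using this
      rw [h6, hφ]; ring
    rw [this]; linarith
  · have hsq : ‖φ - S φ‖ ^ 2 ≤ (2 * ε) ^ 2 := by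
      have h7 : ‖φ - S φ‖ ^ 2 = ‖φ‖ ^ 2 - 2 * (⟪φ, S φ⟫ : ℂ).re + ‖S φ‖ ^ 2 := by
        have := @norm_sub_sq ℂ _ _ _ _ φ (S φ); simpa using this
      have h8 : (⟪φ, S φ⟫ : ℂ).re = c := by
        have := inner_re_symm (𝕜 := ℂ) φ (S φ); simpa [hc] using this
      nlinarith [h7, h8]
    nlinarith [norm_nonneg (φ - S φ), hsq]
end

section
/- Let G be a unimodular locally compact group with Haar measure m, f ∈ L²(G) the density of a probability measure, and A ⊂ G a measurable set. Then ‖f * f‖₂ ≥ m(A·A)^{-1/2} (∫_A f dm)². Consequently, if ∫_A f dm > 1/K, m(A·A) ≤ K m(A), and m(A) ≤ K ‖f‖₂^{-2}, then ‖f * f‖₂ ≥ K^{-3} ‖f‖₂. -/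
open MeasureTheory
open scoped Pointwise ENNReal

/-- On a unimodular locally compact group with Haar measure `m`, for a probability density
`f ∈ L²(G)` and a measurable set `A`: `‖f*f‖₂ ≥ m(A·A)^{-1/2} (∫_A f dm)²`; consequently,
if `∫_A f dm > 1/K`, `m(A·A) ≤ K m(A)` and `m(A) ≤ K ‖f‖₂^{-2}`, then
`‖f*f‖₂ ≥ K⁻³ ‖f‖₂`. -/
theorem stmt8 {G : Type*} [Group G] [TopologicalSpace G] [IsTopologicalGroup G]
    [LocallyCompactSpace G] [SecondCountableTopology G] [MeasurableSpace G] [BorelSpace G]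
    (m : Measure G) [m.IsHaarMeasure] [m.IsMulRightInvariant]
    (f : G → ℝ) (hfmeas : Measurable f) (hf0 : ∀ x, 0 ≤ f x)
    (hf1 : ∫ x, f x ∂m = 1) (hf2 : MemLp f 2 m)
    (A : Set G) (hA : MeasurableSet A) (hApos : 0 < m A) (hAfin : m A < ⊤) :
    (∫ x in A, f x ∂m) ^ 2 / Real.sqrt ((m (A * A)).toReal)
        ≤ (eLpNorm (fun x => ∫ y, f y * f (y⁻¹ * x) ∂m) 2 m).toReal ∧
    ∀ K : ℝ, 1 ≤ K →
      1 / K < ∫ x in A, f x ∂m →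
      m (A * A) ≤ ENNReal.ofReal K * m A →
      (m A).toReal ≤ K * ((eLpNorm f 2 m).toReal) ⁻¹ ^ 2 →
      K⁻¹ ^ 3 * (eLpNorm f 2 m).toReal
        ≤ (eLpNorm (fun x => ∫ y, f y * f (y⁻¹ * x) ∂m) 2 m).toReal := by
  set F : G → ℝ≥0∞ := fun x => ENNReal.ofReal (f x) with hF
  have hFmeas : Measurable F := hfmeas.ennreal_ofReal
  have hGlmeas : Measurable (fun x => ∫⁻ y, F y * F (y⁻¹ * x) ∂m) :=
    Measurable.lintegral_prod_right' (f := fun p : G × G => F p.2 * F (p.2⁻¹ * p.1))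
      (by fun_prop)
  set Gl : G → ℝ≥0∞ := fun x => ∫⁻ y, F y * F (y⁻¹ * x) ∂m with hGl
  have hint : Integrable f m := by
    by_contra h; rw [integral_undef h] at hf1; norm_num at hf1
  have hIF : ∫⁻ x, F x ∂m = 1 := by
    rw [hF, ← ofReal_integral_eq_lintegral_ofReal hint (ae_of_all _ hf0), hf1,
      ENNReal.ofReal_one]
  have hN2 : eLpNorm f 2 m = (∫⁻ x, F x ^ (2:ℝ) ∂m) ^ (1/(2:ℝ)) := by
    rw [eLpNorm_eq_lintegral_rpow_enorm_toReal two_ne_zero ENNReal.ofNat_ne_top,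
      ENNReal.toReal_ofNat]
    congr 1
    apply lintegral_congr; intro x
    rw [hF, Real.enorm_eq_ofReal (hf0 x)]
  -- translation invariance of squared integral
  have htrans : ∀ y : G, ∫⁻ x, F (y⁻¹ * x) ^ (2:ℝ) ∂m = ∫⁻ x, F x ^ (2:ℝ) ∂m :=
    fun y => lintegral_mul_left_eq_self (fun u => F u ^ (2:ℝ)) y⁻¹
  have hconj : (2:ℝ).HolderConjugate 2 := Real.HolderConjugate.two_two
  have hCSinner : ∀ y z : G,
      ∫⁻ x, F (y⁻¹ * x) * F (z⁻¹ * x) ∂m ≤ ∫⁻ x, F x ^ (2:ℝ) ∂m := by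
    intro y z
    calc ∫⁻ x, F (y⁻¹ * x) * F (z⁻¹ * x) ∂m
        ≤ (∫⁻ x, F (y⁻¹ * x) ^ (2:ℝ) ∂m) ^ (1/(2:ℝ)) *
          (∫⁻ x, F (z⁻¹ * x) ^ (2:ℝ) ∂m) ^ (1/(2:ℝ)) :=
          ENNReal.lintegral_mul_le_Lp_mul_Lq m hconj (by fun_prop) (by fun_prop)
      _ = (∫⁻ x, F x ^ (2:ℝ) ∂m) ^ (1/(2:ℝ)) * (∫⁻ x, F x ^ (2:ℝ) ∂m) ^ (1/(2:ℝ)) := by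
          rw [htrans, htrans]
      _ = ∫⁻ x, F x ^ (2:ℝ) ∂m := by
          rw [← ENNReal.rpow_add_of_nonneg (1/2) (1/2) (by norm_num) (by norm_num)]
          norm_num
  set C : ℝ≥0∞ := ∫⁻ x, F x ^ (2:ℝ) ∂m with hCdef
  have hmulC : ∀ D : ℝ≥0∞, ∫⁻ u, F u * D ∂m = D := fun D => by
    rw [lintegral_mul_const'' D hFmeas.aemeasurable, hIF, one_mul]
  have hGlsq : ∫⁻ x, Gl x * Gl x ∂m ≤ C := by
    have h1 : ∀ x, Gl x * Gl x
        = ∫⁻ y, ∫⁻ z, (F y * F (y⁻¹ * x)) * (F z * F (z⁻¹ * x)) ∂m ∂m := by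
      intro x
      calc Gl x * Gl x = ∫⁻ y, (F y * F (y⁻¹ * x)) * Gl x ∂m :=
            (lintegral_mul_const'' (Gl x) (by fun_prop)).symm
        _ = _ := lintegral_congr fun y => (lintegral_const_mul'' _ (by fun_prop)).symm
    calc ∫⁻ x, Gl x * Gl x ∂m
        = ∫⁻ x, ∫⁻ y, ∫⁻ z, (F y * F (y⁻¹ * x)) * (F z * F (z⁻¹ * x)) ∂m ∂m ∂m :=
          lintegral_congr h1
      _ = ∫⁻ y, ∫⁻ x, ∫⁻ z, (F y * F (y⁻¹ * x)) * (F z * F (z⁻¹ * x)) ∂m ∂m ∂m :=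
          lintegral_lintegral_swap (Measurable.aemeasurable
            (Measurable.lintegral_prod_right' (f := fun (q : (G × G) × G) =>
              (F q.1.2 * F (q.1.2⁻¹ * q.1.1)) * (F q.2 * F (q.2⁻¹ * q.1.1)))
              (by fun_prop)))
      _ = ∫⁻ y, ∫⁻ z, ∫⁻ x, (F y * F (y⁻¹ * x)) * (F z * F (z⁻¹ * x)) ∂m ∂m ∂m :=
          lintegral_congr fun y => lintegral_lintegral_swap
            ((by fun_prop : Measurable fun q : G × G =>
              (F y * F (y⁻¹ * q.1)) * (F q.2 * F (q.2⁻¹ * q.1))).aemeasurable)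
      _ = ∫⁻ y, ∫⁻ z, (F y * F z) * ∫⁻ x, F (y⁻¹ * x) * F (z⁻¹ * x) ∂m ∂m ∂m := by
          refine lintegral_congr fun y => lintegral_congr fun z => ?_
          rw [← lintegral_const_mul'' _ (by fun_prop)]
          exact lintegral_congr fun x => by ring
      _ ≤ ∫⁻ y, ∫⁻ z, (F y * F z) * C ∂m ∂m :=
          lintegral_mono fun y => lintegral_mono fun z =>
            mul_le_mul_right (hCSinner y z) _
      _ = C := by
          have inner : ∀ y, ∫⁻ z, (F y * F z) * C ∂m = F y * C := by
            intro y
            simp_rw [mul_assoc]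
            rw [lintegral_const_mul'' _ (by fun_prop), hmulC]
          rw [lintegral_congr inner, hmulC]
  have hGl_int : ∫⁻ x, Gl x ∂m = 1 := by
    calc ∫⁻ x, Gl x ∂m = ∫⁻ y, ∫⁻ x, F y * F (y⁻¹ * x) ∂m ∂m :=
          lintegral_lintegral_swap
            ((by fun_prop : Measurable fun q : G × G =>
              F q.2 * F (q.2⁻¹ * q.1)).aemeasurable)
      _ = ∫⁻ y, F y * 1 ∂m := lintegral_congr fun y => by
          rw [lintegral_const_mul'' _ (by fun_prop),
            lintegral_mul_left_eq_self F y⁻¹, hIF]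
      _ = 1 := by simp [hIF]
  have hglt : ∀ᵐ x ∂m, Gl x < ⊤ :=
    ae_lt_top hGlmeas (by rw [hGl_int]; exact ENNReal.one_ne_top)
  set g : G → ℝ := fun x => ∫ y, f y * f (y⁻¹ * x) ∂m with hgdef
  have hgnn : ∀ x, 0 ≤ g x := fun x => integral_nonneg fun y => mul_nonneg (hf0 y) (hf0 _)
  have hofReal : ∀ᵐ x ∂m, ENNReal.ofReal (g x) = Gl x := by
    filter_upwards [hglt] with x hx
    have hi : Integrable (fun y => f y * f (y⁻¹ * x)) m := by
      refine ⟨(by fun_prop : Measurable fun y => f y * f (y⁻¹ * x)).aestronglyMeasurable, ?_⟩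
      show ∫⁻ y, ‖f y * f (y⁻¹ * x)‖ₑ ∂m < ⊤
      have : ∀ y, ‖f y * f (y⁻¹ * x)‖ₑ = F y * F (y⁻¹ * x) := fun y => by
        rw [Real.enorm_eq_ofReal (mul_nonneg (hf0 y) (hf0 _)), ENNReal.ofReal_mul (hf0 y)]
      rw [lintegral_congr this]
      exact hx
    rw [hgdef]
    rw [ofReal_integral_eq_lintegral_ofReal hi
      (ae_of_all _ fun y => mul_nonneg (hf0 y) (hf0 _))]
    exact lintegral_congr fun y => by rw [ENNReal.ofReal_mul (hf0 y)]
  have hNg : eLpNorm g 2 m = (∫⁻ x, Gl x * Gl x ∂m) ^ (1/(2:ℝ)) := by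
    rw [eLpNorm_eq_lintegral_rpow_enorm_toReal two_ne_zero ENNReal.ofNat_ne_top, ENNReal.toReal_ofNat]
    congr 1
    apply lintegral_congr_ae
    filter_upwards [hofReal] with x hx
    rw [Real.enorm_eq_ofReal (hgnn x), hx,
      show ((2:ℝ)) = ((2:ℕ):ℝ) by norm_num, ENNReal.rpow_natCast, pow_two]
  have hNfin : eLpNorm g 2 m ≤ eLpNorm f 2 m := by
    rw [hNg, hN2]
    exact ENNReal.rpow_le_rpow hGlsq (by norm_num)
  set S : Set G := A * A with hSdef
  set B : Set G := toMeasurable m S with hBdef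
  have hSB : S ⊆ B := subset_toMeasurable m S
  have hBmeas : MeasurableSet B := measurableSet_toMeasurable m S
  have hmB : m B = m S := measure_toMeasurable S
  have hstep1 : ∀ y ∈ A, ∫⁻ z in A, F z ∂m ≤ ∫⁻ x in B, F (y⁻¹ * x) ∂m := by
    intro y hy
    have hsub : y • A ⊆ B := by
      rintro _ ⟨a, ha, rfl⟩
      exact hSB (Set.mul_mem_mul hy ha)
    have hyA : MeasurableSet (y • A) := hA.const_smul y
    calc ∫⁻ z in A, F z ∂m = ∫⁻ x, A.indicator F (y⁻¹ * x) ∂m := by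
          rw [lintegral_mul_left_eq_self (A.indicator F) y⁻¹, lintegral_indicator hA]
      _ = ∫⁻ x in y • A, F (y⁻¹ * x) ∂m := by
          rw [← lintegral_indicator hyA]
          apply lintegral_congr; intro x
          by_cases hx : x ∈ y • A
          · have hm : y⁻¹ * x ∈ A := by
              rwa [← smul_eq_mul, ← Set.mem_smul_set_iff_inv_smul_mem]
            rw [Set.indicator_of_mem hm, Set.indicator_of_mem hx]
          · have hm : y⁻¹ * x ∉ A := fun h => hx
              (by rwa [Set.mem_smul_set_iff_inv_smul_mem, smul_eq_mul])
            rw [Set.indicator_of_notMem hm, Set.indicator_of_notMem hx]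
      _ ≤ ∫⁻ x in B, F (y⁻¹ * x) ∂m :=
          lintegral_mono' (Measure.restrict_mono hsub le_rfl) le_rfl
  have key : (∫⁻ y in A, F y ∂m) * (∫⁻ z in A, F z ∂m) ≤ ∫⁻ x in B, Gl x ∂m := by
    calc (∫⁻ y in A, F y ∂m) * (∫⁻ z in A, F z ∂m)
        = ∫⁻ y in A, F y * ∫⁻ z in A, F z ∂m ∂m :=
          (lintegral_mul_const'' _ hFmeas.aemeasurable).symm
      _ ≤ ∫⁻ y in A, F y * ∫⁻ x in B, F (y⁻¹ * x) ∂m ∂m := by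
          refine setLIntegral_mono ?_ fun y hy => mul_le_mul_right (hstep1 y hy) _
          exact hFmeas.mul (Measurable.lintegral_prod_right'
            (f := fun q : G × G => F (q.1⁻¹ * q.2)) (by fun_prop))
      _ = ∫⁻ y in A, ∫⁻ x in B, F y * F (y⁻¹ * x) ∂m ∂m :=
          lintegral_congr fun y => (lintegral_const_mul'' _ (by fun_prop)).symm
      _ = ∫⁻ x in B, ∫⁻ y in A, F y * F (y⁻¹ * x) ∂m ∂m :=
          lintegral_lintegral_swap ((by fun_prop : Measurable fun q : G × G =>
            F q.1 * F (q.1⁻¹ * q.2)).aemeasurable)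
      _ ≤ ∫⁻ x in B, Gl x ∂m :=
          lintegral_mono fun x => setLIntegral_le_lintegral _ _
  have hCS : ∫⁻ x in B, Gl x ∂m
      ≤ (∫⁻ x, Gl x * Gl x ∂m) ^ (1/(2:ℝ)) * (m B) ^ (1/(2:ℝ)) := by
    calc ∫⁻ x in B, Gl x ∂m
        = ∫⁻ x, (Gl * (B.indicator fun _ => (1:ℝ≥0∞))) x ∂m := by
          rw [← lintegral_indicator hBmeas]
          apply lintegral_congr; intro x
          by_cases hx : x ∈ B <;> simp [Pi.mul_apply, hx]
      _ ≤ (∫⁻ x, Gl x ^ (2:ℝ) ∂m) ^ (1/(2:ℝ)) *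
          (∫⁻ x, (B.indicator (fun _ => (1:ℝ≥0∞)) x) ^ (2:ℝ) ∂m) ^ (1/(2:ℝ)) :=
          ENNReal.lintegral_mul_le_Lp_mul_Lq m hconj hGlmeas.aemeasurable
            ((measurable_one.indicator hBmeas).aemeasurable)
      _ = (∫⁻ x, Gl x * Gl x ∂m) ^ (1/(2:ℝ)) * (m B) ^ (1/(2:ℝ)) := by
          congr 2
          · exact lintegral_congr fun x => by
              rw [show ((2:ℝ)) = ((2:ℕ):ℝ) by norm_num, ENNReal.rpow_natCast, pow_two]
          · rw [← lintegral_indicator_one hBmeas]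
            apply lintegral_congr; intro x
            by_cases hx : x ∈ B
            · simp [hx]
            · simp [hx, ENNReal.zero_rpow_of_pos (by norm_num : (0:ℝ) < 2)]
  have main : (∫⁻ y in A, F y ∂m) * (∫⁻ y in A, F y ∂m)
      ≤ eLpNorm g 2 m * (m S) ^ (1/(2:ℝ)) := by
    refine key.trans (hCS.trans ?_)
    rw [hNg, hmB]
  have haofReal : ENNReal.ofReal (∫ x in A, f x ∂m) = ∫⁻ y in A, F y ∂m :=
    ofReal_integral_eq_lintegral_ofReal hint.restrict (ae_of_all _ hf0)
  set a : ℝ := ∫ x in A, f x ∂m with hadef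
  have han : 0 ≤ a := integral_nonneg hf0
  have hIA_toReal : (∫⁻ y in A, F y ∂m).toReal = a := by
    rw [← haofReal, ENNReal.toReal_ofReal han]
  have hNne : eLpNorm g 2 m ≠ ⊤ := (hNfin.trans_lt hf2.2).ne
  set Nt : ℝ := (eLpNorm g 2 m).toReal with hNtdef
  have hNtnn : 0 ≤ Nt := ENNReal.toReal_nonneg
  have part1 : a ^ 2 / Real.sqrt ((m S).toReal) ≤ Nt := by
    rcases eq_or_ne (m S) ⊤ with ht | ht
    · rw [ht]
      simp [hNtnn]
    · have hrne : (m S) ^ (1/(2:ℝ)) ≠ ⊤ := ENNReal.rpow_ne_top_of_nonneg (by norm_num) ht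
      have h1 : a * a ≤ Nt * ((m S) ^ (1/(2:ℝ))).toReal := by
        have h2 := ENNReal.toReal_mono (ENNReal.mul_ne_top hNne hrne) main
        rwa [ENNReal.toReal_mul, ENNReal.toReal_mul, hIA_toReal] at h2
      have hsq : ((m S) ^ (1/(2:ℝ))).toReal = Real.sqrt ((m S).toReal) := by
        rw [Real.sqrt_eq_rpow, ENNReal.toReal_rpow]
      rw [← hsq]
      rcases eq_or_lt_of_le (show (0:ℝ) ≤ ((m S) ^ (1/(2:ℝ))).toReal from
        ENNReal.toReal_nonneg) with h0 | h0
      · rw [← h0, div_zero]; exact hNtnn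
      · rw [div_le_iff₀ h0, pow_two]; exact h1
  refine ⟨part1, ?_⟩
  intro K hK hKa hKAA hKA
  have hK0 : (0:ℝ) < K := lt_of_lt_of_le one_pos hK
  set nf : ℝ := (eLpNorm f 2 m).toReal with hnfdef
  have hnf0 : 0 ≤ nf := ENNReal.toReal_nonneg
  have hmAt : 0 < (m A).toReal := ENNReal.toReal_pos hApos.ne' hAfin.ne
  have hnfpos : 0 < nf := by
    rcases eq_or_lt_of_le hnf0 with h | h
    · exfalso
      rw [← h] at hKA
      simp only [inv_zero, ne_eq] at hKA
      rw [zero_pow (by norm_num), mul_zero] at hKA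
      linarith
    · exact h
  have hSfin : m S ≠ ⊤ :=
    (lt_of_le_of_lt hKAA (ENNReal.mul_lt_top ENNReal.ofReal_lt_top hAfin)).ne
  set tt : ℝ := (m S).toReal with httdef
  have htt1 : tt ≤ K * (m A).toReal := by
    have h2 := ENNReal.toReal_mono (ENNReal.mul_ne_top ENNReal.ofReal_ne_top hAfin.ne) hKAA
    rwa [ENNReal.toReal_mul, ENNReal.toReal_ofReal hK0.le] at h2
  have htt2 : tt ≤ (K * nf⁻¹) ^ 2 := by
    calc tt ≤ K * (m A).toReal := htt1
      _ ≤ K * (K * nf⁻¹ ^ 2) := mul_le_mul_of_nonneg_left hKA hK0.le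
      _ = (K * nf⁻¹) ^ 2 := by ring
  have hsqrt : Real.sqrt tt ≤ K * nf⁻¹ := by
    rw [show K * nf⁻¹ = Real.sqrt ((K * nf⁻¹) ^ 2) from (Real.sqrt_sq (by positivity)).symm]
    exact Real.sqrt_le_sqrt htt2
  have httpos : 0 < tt := by
    obtain ⟨a0, ha0⟩ := nonempty_of_measure_ne_zero hApos.ne'
    have hsub : a0 • A ⊆ S := by
      rintro _ ⟨b, hb, rfl⟩
      exact Set.mul_mem_mul ha0 hb
    have him : m (a0 • A) = m A := by
      rw [show a0 • A = (fun x => a0⁻¹ * x) ⁻¹' A by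
        ext x
        simp [Set.mem_smul_set_iff_inv_smul_mem, smul_eq_mul]]
      exact measure_preimage_mul m a0⁻¹ A
    have hle : m A ≤ m S := him ▸ measure_mono hsub
    exact ENNReal.toReal_pos (lt_of_lt_of_le hApos hle).ne' hSfin
  have hfinal : (1/K) ^ 2 / (K * nf⁻¹) ≤ a ^ 2 / Real.sqrt tt := by
    apply div_le_div₀ (sq_nonneg a)
      (pow_le_pow_left₀ (by positivity) hKa.le 2) (Real.sqrt_pos.2 httpos) hsqrt
  calc K⁻¹ ^ 3 * nf = (1/K) ^ 2 / (K * nf⁻¹) := by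
        rw [div_eq_mul_inv, mul_inv, inv_inv, one_div, inv_pow]; ring
    _ ≤ a ^ 2 / Real.sqrt tt := hfinal
    _ ≤ Nt := part1
end
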